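/- Let (F₁, F₂) and (G₁, G₂) be the CHFIS pairs, with the same parameters α_{n,m}, β_{n,m}, γ_{n,m}, for generalized interpolation data Δ = {(x_i, y_j, z_{i,j}, t_{i,j})} and Δ* = {(x*_i, y*_j, z_{i,j}, t_{i,j})} respectively, where the knots satisfy the invariance-of-ratio condition and S* ⊆ S, and let R : S → S* be the cell-wise affine transfer map. Suppose M̄ ≥ 0 and δ ∈ (0,1] are such that |F₂(X) − F₂(X̄)| ≤ M̄ · d_M(X,X̄)^δ for all X, X̄ ∈ S. Then sup_{(x,y) ∈ S} |G₂(R(x,y)) − F₂(x,y)| ≤ (2γ/(1−γ)) · M̄ · max{ (|x_n − x*_n| + |y_m − y*_m|)^δ : 0 ≤ n ≤ N, 0 ≤ m ≤ M }, where γ = max_{n,m}|γ_{n,m}|. -/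

import Mathlib

open Real Set

noncomputable section

/-- `z_eva` (resp. `t_eva`) from the paper: `z N M - z N 0 - z 0 M + z 0 0`. -/
def eva (N M : ℕ) (z : ℕ → ℕ → ℝ) : ℝ := z N M - z N 0 - z 0 M + z 0 0

/-- The coefficient `g_{n,m}` determined by the join-up conditions. -/
def gCoef (N M : ℕ) (x y : ℕ → ℝ) (z t : ℕ → ℕ → ℝ) (a b : ℕ → ℕ → ℝ) (n m : ℕ) : ℝ :=
  (z (n-1) (m-1) - z (n-1) m - z n (m-1) + z n m
    - a n m * eva N M z - b n m * eva N M t) / ((x 0 - x N) * (y 0 - y M))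

/-- The coefficient `e_{n,m}`. -/
def eCoef (N M : ℕ) (x y : ℕ → ℝ) (z t : ℕ → ℕ → ℝ) (a b : ℕ → ℕ → ℝ) (n m : ℕ) : ℝ :=
  (z (n-1) (m-1) - z n (m-1) - a n m * (z 0 0 - z N 0) - b n m * (t 0 0 - t N 0)
    - gCoef N M x y z t a b n m * (x 0 - x N) * y 0) / (x 0 - x N)

/-- The coefficient `f_{n,m}`. -/
def fCoef (N M : ℕ) (x y : ℕ → ℝ) (z t : ℕ → ℕ → ℝ) (a b : ℕ → ℕ → ℝ) (n m : ℕ) : ℝ :=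
  (z (n-1) (m-1) - z (n-1) m - a n m * (z 0 0 - z 0 M) - b n m * (t 0 0 - t 0 M)
    - gCoef N M x y z t a b n m * (y 0 - y M) * x 0) / (y 0 - y M)

/-- The coefficient `k_{n,m}`. -/
def kCoef (N M : ℕ) (x y : ℕ → ℝ) (z t : ℕ → ℕ → ℝ) (a b : ℕ → ℕ → ℝ) (n m : ℕ) : ℝ :=
  z n m - eCoef N M x y z t a b n m * x N - fCoef N M x y z t a b n m * y M
    - a n m * z N M - b n m * t N M - gCoef N M x y z t a b n m * x N * y M

/-- `p_{n,m}(X,Y) = e_{n,m} X + f_{n,m} Y + g_{n,m} X Y + k_{n,m}`. -/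
def pMap (N M : ℕ) (x y : ℕ → ℝ) (z t : ℕ → ℕ → ℝ) (a b : ℕ → ℕ → ℝ) (n m : ℕ)
    (X Y : ℝ) : ℝ :=
  eCoef N M x y z t a b n m * X + fCoef N M x y z t a b n m * Y
    + gCoef N M x y z t a b n m * X * Y + kCoef N M x y z t a b n m

/-- `q_{n,m}(X,Y) = ẽ_{n,m} X + f̃_{n,m} Y + g̃_{n,m} X Y + k̃_{n,m}`; it is `p` built from the
data `t` with parameters `γ` and `0`. -/
def qMap (N M : ℕ) (x y : ℕ → ℝ) (t : ℕ → ℕ → ℝ) (c : ℕ → ℕ → ℝ) (n m : ℕ) (X Y : ℝ) : ℝ :=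
  pMap N M x y t t c (fun _ _ => 0) n m X Y

/-- `φ_n` (resp. `ψ_m`): the affine map of `[x₀, x_N]` onto `[x_{n-1}, x_n]`. -/
def phiMap (N : ℕ) (x : ℕ → ℝ) (n : ℕ) (X : ℝ) : ℝ :=
  x (n-1) + (x n - x (n-1)) * (X - x 0) / (x N - x 0)

/-- Validity of generalized interpolation data: `N, M ≥ 1`, strictly increasing knots,
`|α_{n,m}| < 1` and `|β_{n,m}| + |γ_{n,m}| < 1`. -/
structure DataOK (N M : ℕ) (x y : ℕ → ℝ) (a b c : ℕ → ℕ → ℝ) : Prop where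
  hN : 1 ≤ N
  hM : 1 ≤ M
  hx : ∀ i < N, x i < x (i+1)
  hy : ∀ j < M, y j < y (j+1)
  ha : ∀ n m, 1 ≤ n → n ≤ N → 1 ≤ m → m ≤ M → |a n m| < 1
  hbc : ∀ n m, 1 ≤ n → n ≤ N → 1 ≤ m → m ≤ M → |b n m| + |c n m| < 1

/-- `(F₁, F₂)` is the CHFIS pair for the generalized interpolation data. -/
def IsCHFIS (N M : ℕ) (x y : ℕ → ℝ) (z t : ℕ → ℕ → ℝ) (a b c : ℕ → ℕ → ℝ)
    (F₁ F₂ : ℝ → ℝ → ℝ) : Prop :=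
  ContinuousOn (fun P : ℝ × ℝ => F₁ P.1 P.2) (Icc (x 0) (x N) ×ˢ Icc (y 0) (y M)) ∧
  ContinuousOn (fun P : ℝ × ℝ => F₂ P.1 P.2) (Icc (x 0) (x N) ×ˢ Icc (y 0) (y M)) ∧
  (∀ i ≤ N, ∀ j ≤ M, F₁ (x i) (y j) = z i j ∧ F₂ (x i) (y j) = t i j) ∧
  ∀ n m, 1 ≤ n → n ≤ N → 1 ≤ m → m ≤ M →
    ∀ X ∈ Icc (x 0) (x N), ∀ Y ∈ Icc (y 0) (y M),
      F₁ (phiMap N x n X) (phiMap M y m Y)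
        = a n m * F₁ X Y + b n m * F₂ X Y + pMap N M x y z t a b n m X Y ∧
      F₂ (phiMap N x n X) (phiMap M y m Y)
        = c n m * F₂ X Y + qMap N M x y t c n m X Y

/-- The invariance-of-ratio condition between the knots `x, y` and the knots `xs, ys`. -/
def RatioInv (N M : ℕ) (x y xs ys : ℕ → ℝ) : Prop :=
  (∀ n, 1 ≤ n → n ≤ N → (x 0 - x N) / (xs 0 - xs N) = (x (n-1) - x n) / (xs (n-1) - xs n)) ∧
  (∀ m, 1 ≤ m → m ≤ M → (y 0 - y M) / (ys 0 - ys M) = (y (m-1) - y m) / (ys (m-1) - ys m))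

/-- `T : [x₀, x_N] → [xs₀, xs_N]` is the cell-wise affine transfer map, sending
`[x_{n-1}, x_n]` affinely onto `[xs_{n-1}, xs_n]` (one coordinate of `R` resp. `K`). -/
def IsTransfer (N : ℕ) (x xs : ℕ → ℝ) (T : ℝ → ℝ) : Prop :=
  ∀ n, 1 ≤ n → n ≤ N → ∀ X ∈ Icc (x (n-1)) (x n),
    T X = xs (n-1) + (xs n - xs (n-1)) * (X - x (n-1)) / (x n - x (n-1))

/-- `max { |a n m| : 1 ≤ n ≤ N, 1 ≤ m ≤ M }` (as an `sSup`). -/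
def supParam (N M : ℕ) (a : ℕ → ℕ → ℝ) : ℝ :=
  sSup {v : ℝ | ∃ n m, 1 ≤ n ∧ n ≤ N ∧ 1 ≤ m ∧ m ≤ M ∧ v = |a n m|}

/-- `max { (|x_n - xs_n| + |y_m - ys_m|)^δ : 0 ≤ n ≤ N, 0 ≤ m ≤ M }` (as an `sSup`). -/
def supKnotDiff (N M : ℕ) (x xs y ys : ℕ → ℝ) (d : ℝ) : ℝ :=
  sSup {v : ℝ | ∃ n m, n ≤ N ∧ m ≤ M ∧ v = (|x n - xs n| + |y m - ys m|) ^ d}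

/-- `max { |z_{n,m} - zs_{n,m}| : 0 ≤ n ≤ N, 0 ≤ m ≤ M }` (as an `sSup`). -/
def supValDiff (N M : ℕ) (z zs : ℕ → ℕ → ℝ) : ℝ :=
  sSup {v : ℝ | ∃ n m, n ≤ N ∧ m ≤ M ∧ v = |z n m - zs n m|}

/-- `max { |z_{i,j} - z_{k,l}| : 0 ≤ i,j,k,l ≤ N }` (as an `sSup`). -/
def supPairDiff (N : ℕ) (z : ℕ → ℕ → ℝ) : ℝ :=
  sSup {v : ℝ | ∃ i j k l, i ≤ N ∧ j ≤ N ∧ k ≤ N ∧ l ≤ N ∧ v = |z i j - z k l|}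

-- auxiliary lemmas
set_option maxHeartbeats 1000000 in
theorem my_generic_corners (x0 xN y0 yM P Q R S z00 zN0 z0M zNM t00 tN0 t0M tNM A B e f g k : ℝ)
    (hx : x0 - xN ≠ 0) (hy : y0 - yM ≠ 0)
    (hg : g = (P - Q - R + S - A*(zNM - zN0 - z0M + z00) - B*(tNM - tN0 - t0M + t00))
        / ((x0-xN)*(y0-yM)))
    (he : e = (P - R - A*(z00 - zN0) - B*(t00 - tN0) - g*(x0-xN)*y0)/(x0-xN))
    (hf : f = (P - Q - A*(z00 - z0M) - B*(t00 - t0M) - g*(y0-yM)*x0)/(y0-yM))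
    (hk : k = S - e*xN - f*yM - A*zNM - B*tNM - g*xN*yM) :
    e*x0 + f*y0 + g*x0*y0 + k = P - A*z00 - B*t00 ∧
    e*xN + f*y0 + g*xN*y0 + k = R - A*zN0 - B*tN0 ∧
    e*x0 + f*yM + g*x0*yM + k = Q - A*z0M - B*t0M ∧
    e*xN + f*yM + g*xN*yM + k = S - A*zNM - B*tNM := by
  subst hk he hf hg
  refine ⟨?_, ?_, ?_, ?_⟩ <;> field_simp <;> ring

theorem my_bilin_expand (A B C D x0 xN y0 yM u v : ℝ) :
    A*(x0+(xN-x0)*u) + B*(y0+(yM-y0)*v) + C*(x0+(xN-x0)*u)*(y0+(yM-y0)*v) + D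
    = (1-u)*(1-v)*(A*x0+B*y0+C*x0*y0+D) + u*(1-v)*(A*xN+B*y0+C*xN*y0+D)
      + (1-u)*v*(A*x0+B*yM+C*x0*yM+D) + u*v*(A*xN+B*yM+C*xN*yM+D) := by ring

theorem my_pMap_interp (N M : ℕ) (x y : ℕ → ℝ) (z t : ℕ → ℕ → ℝ) (a b : ℕ → ℕ → ℝ) (n m : ℕ)
    (hx : x 0 - x N ≠ 0) (hy : y 0 - y M ≠ 0) (u v : ℝ) :
    pMap N M x y z t a b n m (x 0 + (x N - x 0)*u) (y 0 + (y M - y 0)*v)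
    = (1-u)*(1-v)*(z (n-1) (m-1) - a n m * z 0 0 - b n m * t 0 0)
      + u*(1-v)*(z n (m-1) - a n m * z N 0 - b n m * t N 0)
      + (1-u)*v*(z (n-1) m - a n m * z 0 M - b n m * t 0 M)
      + u*v*(z n m - a n m * z N M - b n m * t N M) := by
  obtain ⟨h1, h2, h3, h4⟩ := my_generic_corners (x 0) (x N) (y 0) (y M)
    (z (n-1) (m-1)) (z (n-1) m) (z n (m-1)) (z n m)
    (z 0 0) (z N 0) (z 0 M) (z N M) (t 0 0) (t N 0) (t 0 M) (t N M)
    (a n m) (b n m)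
    (eCoef N M x y z t a b n m) (fCoef N M x y z t a b n m)
    (gCoef N M x y z t a b n m) (kCoef N M x y z t a b n m)
    hx hy rfl rfl rfl rfl
  unfold pMap
  rw [my_bilin_expand, h1, h2, h3, h4]

theorem my_pMap_transfer (N M : ℕ) (x y xs ys : ℕ → ℝ) (z t : ℕ → ℕ → ℝ) (a b : ℕ → ℕ → ℝ)
    (n m : ℕ) (hx : x 0 - x N ≠ 0) (hy : y 0 - y M ≠ 0)
    (hxs : xs 0 - xs N ≠ 0) (hys : ys 0 - ys M ≠ 0) (u v : ℝ) :
    pMap N M xs ys z t a b n m (xs 0 + (xs N - xs 0)*u) (ys 0 + (ys M - ys 0)*v)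
    = pMap N M x y z t a b n m (x 0 + (x N - x 0)*u) (y 0 + (y M - y 0)*v) := by
  rw [my_pMap_interp N M xs ys z t a b n m hxs hys u v,
    my_pMap_interp N M x y z t a b n m hx hy u v]

theorem my_knots_lt (x : ℕ → ℝ) (N : ℕ) (h : ∀ i < N, x i < x (i+1)) :
    ∀ i j, i < j → j ≤ N → x i < x j := by
  intro i j
  induction j with
  | zero => omega
  | succ k ih =>
    intro h1 h2
    rcases Nat.lt_succ_iff_lt_or_eq.mp h1 with h' | h'
    · exact (ih h' (by omega)).trans (h k (by omega))
    · subst h'; exact h i (by omega)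

theorem my_exists_cell (x : ℕ → ℝ) (N : ℕ) (hN : 1 ≤ N) (X : ℝ)
    (h0 : x 0 ≤ X) (hXN : X ≤ x N) :
    ∃ n, 1 ≤ n ∧ n ≤ N ∧ x (n-1) ≤ X ∧ X ≤ x n := by
  have aux : ∀ k, 1 ≤ k → k ≤ N → X ≤ x k →
      ∃ n, 1 ≤ n ∧ n ≤ k ∧ x (n-1) ≤ X ∧ X ≤ x n := by
    intro k
    induction k with
    | zero => omega
    | succ j ih =>
      intro _ hkN hXk
      by_cases hj : 1 ≤ j
      · by_cases hXj : X ≤ x j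
        · obtain ⟨n, a1, a2, a3, a4⟩ := ih hj (by omega) hXj
          exact ⟨n, a1, by omega, a3, a4⟩
        · refine ⟨j+1, by omega, le_rfl, ?_, hXk⟩
          simpa using le_of_not_ge hXj
      · have hj0 : j = 0 := by omega
        subst hj0
        exact ⟨1, le_rfl, le_rfl, by simpa using h0, hXk⟩
  obtain ⟨n, a1, a2, a3, a4⟩ := aux N hN le_rfl hXN
  exact ⟨n, a1, a2, a3, a4⟩

theorem my_affine_mem (a b : ℝ) (hab : a ≤ b) (u : ℝ) (h0 : 0 ≤ u) (h1 : u ≤ 1) :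
    a + (b - a) * u ∈ Icc a b := by
  constructor <;> nlinarith

/-- knot transfer under ratio invariance. -/
theorem my_transfer_knot (N : ℕ) (x xs : ℕ → ℝ)
    (hx : ∀ i < N, x i < x (i+1)) (hxs : ∀ i < N, xs i < xs (i+1))
    (hxlt : x 0 < x N) (hxslt : xs 0 < xs N)
    (hr : ∀ n, 1 ≤ n → n ≤ N →
      (x 0 - x N) / (xs 0 - xs N) = (x (n-1) - x n) / (xs (n-1) - xs n)) :
    ∀ n, n ≤ N → xs n = xs 0 + (xs N - xs 0) * ((x n - x 0) / (x N - x 0)) := by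
  have hxne : x N - x 0 ≠ 0 := sub_ne_zero.mpr hxlt.ne'
  have hknot : ∀ n, n ≤ N →
      xs n * (x N - x 0) = xs 0 * (x N - x 0) + (xs N - xs 0) * (x n - x 0) := by
    intro n
    induction n with
    | zero => intro _; ring
    | succ k ih =>
      intro hk
      have ihk := ih (by omega)
      have hr' := hr (k+1) (by omega) hk
      simp only [Nat.add_sub_cancel] at hr'
      have h2 : xs k - xs (k+1) ≠ 0 :=
        sub_ne_zero.mpr (my_knots_lt xs N hxs k (k+1) (by omega) hk).ne
      have h1 : xs 0 - xs N ≠ 0 := sub_ne_zero.mpr hxslt.ne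
      have hcross := (div_eq_div_iff h1 h2).mp hr'
      linear_combination ihk + hcross
  intro n hn
  have h := hknot n hn
  field_simp
  linear_combination h

theorem my_transfer_on_Icc (N : ℕ) (x xs : ℕ → ℝ) (hN : 1 ≤ N)
    (hx : ∀ i < N, x i < x (i+1)) (hxs : ∀ i < N, xs i < xs (i+1))
    (hr : ∀ n, 1 ≤ n → n ≤ N →
      (x 0 - x N) / (xs 0 - xs N) = (x (n-1) - x n) / (xs (n-1) - xs n))
    (T : ℝ → ℝ) (hT : IsTransfer N x xs T) :
    ∀ X ∈ Icc (x 0) (x N), T X = xs 0 + (xs N - xs 0) * ((X - x 0) / (x N - x 0)) := by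
  have hxlt : x 0 < x N := my_knots_lt x N hx 0 N hN le_rfl
  have hxslt : xs 0 < xs N := my_knots_lt xs N hxs 0 N hN le_rfl
  have hxne : x N - x 0 ≠ 0 := sub_ne_zero.mpr hxlt.ne'
  have hk := my_transfer_knot N x xs hx hxs hxlt hxslt hr
  intro X hX
  obtain ⟨n, h1, h2, h3, h4⟩ := my_exists_cell x N hN X hX.1 hX.2
  have hd : x (n-1) < x n := my_knots_lt x N hx (n-1) n (by omega) h2
  have hdne : x n - x (n-1) ≠ 0 := sub_ne_zero.mpr hd.ne'
  rw [hT n h1 h2 X ⟨h3, h4⟩, hk n h2, hk (n-1) (by omega)]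
  field_simp
  ring

theorem my_comp_eq (N : ℕ) (x xs : ℕ → ℝ) (hN : 1 ≤ N)
    (hx : ∀ i < N, x i < x (i+1)) (hxs : ∀ i < N, xs i < xs (i+1))
    (hr : ∀ n, 1 ≤ n → n ≤ N →
      (x 0 - x N) / (xs 0 - xs N) = (x (n-1) - x n) / (xs (n-1) - xs n)) :
    ∀ n, 1 ≤ n → n ≤ N → ∀ X : ℝ,
      phiMap N xs n (xs 0 + (xs N - xs 0) * ((X - x 0) / (x N - x 0)))
        = xs 0 + (xs N - xs 0) * ((phiMap N x n X - x 0) / (x N - x 0)) := by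
  have hxlt : x 0 < x N := my_knots_lt x N hx 0 N hN le_rfl
  have hxslt : xs 0 < xs N := my_knots_lt xs N hxs 0 N hN le_rfl
  have hxne : x N - x 0 ≠ 0 := sub_ne_zero.mpr hxlt.ne'
  have hxsne : xs N - xs 0 ≠ 0 := sub_ne_zero.mpr hxslt.ne'
  have hk := my_transfer_knot N x xs hx hxs hxlt hxslt hr
  intro n h1 h2 X
  unfold phiMap
  rw [hk n h2, hk (n-1) (by omega)]
  field_simp
  ring

/-- the bound `‖G₂ ∘ R - F₂‖_∞ ≤ (2γ/(1-γ)) M̄ max (…)^δ` on `S`, where `R`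
is the cell-wise affine transfer map `S → S*`. -/
theorem chfis_stability_indep_F2_R (N M : ℕ) (x y xs ys : ℕ → ℝ) (z t : ℕ → ℕ → ℝ)
    (a b c : ℕ → ℕ → ℝ)
    (hD : DataOK N M x y a b c) (hDs : DataOK N M xs ys a b c)
    (hratio : RatioInv N M x y xs ys)
    (hsub : Icc (xs 0) (xs N) ×ˢ Icc (ys 0) (ys M) ⊆ Icc (x 0) (x N) ×ˢ Icc (y 0) (y M))
    (RX RY : ℝ → ℝ)
    (hRX : IsTransfer N x xs RX) (hRY : IsTransfer M y ys RY)
    (F₁ F₂ G₁ G₂ : ℝ → ℝ → ℝ)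
    (hF : IsCHFIS N M x y z t a b c F₁ F₂)
    (hG : IsCHFIS N M xs ys z t a b c G₁ G₂)
    (Mb δ : ℝ) (hMb : 0 ≤ Mb) (hδ : δ ∈ Set.Ioc (0:ℝ) 1)
    (hH2 : ∀ X ∈ Icc (x 0) (x N), ∀ Y ∈ Icc (y 0) (y M),
      ∀ X' ∈ Icc (x 0) (x N), ∀ Y' ∈ Icc (y 0) (y M),
        |F₂ X Y - F₂ X' Y'| ≤ Mb * (|X - X'| + |Y - Y'|) ^ δ) :
    ∀ X ∈ Icc (x 0) (x N), ∀ Y ∈ Icc (y 0) (y M),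
      |G₂ (RX X) (RY Y) - F₂ X Y| ≤
        2 * supParam N M c / (1 - supParam N M c) * Mb
          * supKnotDiff N M x xs y ys δ := by
  -- basic strict inequalities
  have hxlt : x 0 < x N := my_knots_lt x N hD.hx 0 N hD.hN le_rfl
  have hylt : y 0 < y M := my_knots_lt y M hD.hy 0 M hD.hM le_rfl
  have hxslt : xs 0 < xs N := my_knots_lt xs N hDs.hx 0 N hD.hN le_rfl
  have hyslt : ys 0 < ys M := my_knots_lt ys M hDs.hy 0 M hD.hM le_rfl
  have hxne : x N - x 0 ≠ 0 := sub_ne_zero.mpr hxlt.ne'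
  have hyne : y M - y 0 ≠ 0 := sub_ne_zero.mpr hylt.ne'
  have hxne' : x 0 - x N ≠ 0 := sub_ne_zero.mpr hxlt.ne
  have hyne' : y 0 - y M ≠ 0 := sub_ne_zero.mpr hylt.ne
  have hxsne' : xs 0 - xs N ≠ 0 := sub_ne_zero.mpr hxslt.ne
  have hysne' : ys 0 - ys M ≠ 0 := sub_ne_zero.mpr hyslt.ne
  -- facts about Γ = supParam N M c
  set Γ := supParam N M c with hΓdef
  have hcfin : {v : ℝ | ∃ n m, 1 ≤ n ∧ n ≤ N ∧ 1 ≤ m ∧ m ≤ M ∧ v = |c n m|}.Finite := by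
    apply Set.Finite.subset (Set.Finite.image (fun p : ℕ × ℕ => |c p.1 p.2|)
      ((Set.finite_Icc 1 N).prod (Set.finite_Icc 1 M)))
    rintro v ⟨n, m, h1, h2, h3, h4, rfl⟩
    exact ⟨(n, m), ⟨Set.mem_Icc.mpr ⟨h1, h2⟩, Set.mem_Icc.mpr ⟨h3, h4⟩⟩, rfl⟩
  have hcbdd := hcfin.bddAbove
  have hcne : {v : ℝ | ∃ n m, 1 ≤ n ∧ n ≤ N ∧ 1 ≤ m ∧ m ≤ M ∧ v = |c n m|}.Nonempty :=
    ⟨|c 1 1|, 1, 1, le_rfl, hD.hN, le_rfl, hD.hM, rfl⟩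
  have hΓmem : Γ ∈ {v : ℝ | ∃ n m, 1 ≤ n ∧ n ≤ N ∧ 1 ≤ m ∧ m ≤ M ∧ v = |c n m|} :=
    hcne.csSup_mem hcfin
  have hΓlt1 : Γ < 1 := by
    obtain ⟨n, m, h1, h2, h3, h4, hv⟩ := hΓmem
    rw [hv]
    calc |c n m| ≤ |b n m| + |c n m| := le_add_of_nonneg_left (abs_nonneg _)
      _ < 1 := hD.hbc n m h1 h2 h3 h4
  have hΓge : ∀ n m, 1 ≤ n → n ≤ N → 1 ≤ m → m ≤ M → |c n m| ≤ Γ :=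
    fun n m h1 h2 h3 h4 => le_csSup hcbdd ⟨n, m, h1, h2, h3, h4, rfl⟩
  have hΓ0 : 0 ≤ Γ := le_trans (abs_nonneg _) (hΓge 1 1 le_rfl hD.hN le_rfl hD.hM)
  -- the right-hand side is nonnegative
  have hkfin : {v : ℝ | ∃ n m, n ≤ N ∧ m ≤ M ∧ v = (|x n - xs n| + |y m - ys m|) ^ δ}.Finite := by
    apply Set.Finite.subset (Set.Finite.image
      (fun p : ℕ × ℕ => (|x p.1 - xs p.1| + |y p.2 - ys p.2|) ^ δ)
      ((Set.finite_Iic N).prod (Set.finite_Iic M)))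
    rintro v ⟨n, m, h1, h2, rfl⟩
    exact ⟨(n, m), ⟨Set.mem_Iic.mpr h1, Set.mem_Iic.mpr h2⟩, rfl⟩
  have hsKD : 0 ≤ supKnotDiff N M x xs y ys δ := by
    have hmem : (|x 0 - xs 0| + |y 0 - ys 0|) ^ δ ∈
        {v : ℝ | ∃ n m, n ≤ N ∧ m ≤ M ∧ v = (|x n - xs n| + |y m - ys m|) ^ δ} :=
      ⟨0, 0, Nat.zero_le _, Nat.zero_le _, rfl⟩
    unfold supKnotDiff
    exact le_trans (by positivity) (le_csSup hkfin.bddAbove hmem)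
  have hRHS : 0 ≤ 2 * Γ / (1 - Γ) * Mb * supKnotDiff N M x xs y ys δ :=
    mul_nonneg (mul_nonneg (div_nonneg (by linarith) (by linarith)) hMb) hsKD
  -- transfer maps agree with the global affine map on S
  have hRL : ∀ X ∈ Icc (x 0) (x N),
      RX X = xs 0 + (xs N - xs 0) * ((X - x 0) / (x N - x 0)) :=
    my_transfer_on_Icc N x xs hD.hN hD.hx hDs.hx hratio.1 RX hRX
  have hRL' : ∀ Y ∈ Icc (y 0) (y M),
      RY Y = ys 0 + (ys M - ys 0) * ((Y - y 0) / (y M - y 0)) :=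
    my_transfer_on_Icc M y ys hD.hM hD.hy hDs.hy hratio.2 RY hRY
  -- the affine map sends S into S*
  have hLmem : ∀ X ∈ Icc (x 0) (x N),
      xs 0 + (xs N - xs 0) * ((X - x 0) / (x N - x 0)) ∈ Icc (xs 0) (xs N) := by
    intro X hX
    exact my_affine_mem (xs 0) (xs N) hxslt.le _
      (div_nonneg (by linarith [hX.1]) (by linarith))
      ((div_le_one (by linarith)).mpr (by linarith [hX.2]))
  have hL'mem : ∀ Y ∈ Icc (y 0) (y M),
      ys 0 + (ys M - ys 0) * ((Y - y 0) / (y M - y 0)) ∈ Icc (ys 0) (ys M) := by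
    intro Y hY
    exact my_affine_mem (ys 0) (ys M) hyslt.le _
      (div_nonneg (by linarith [hY.1]) (by linarith))
      ((div_le_one (by linarith)).mpr (by linarith [hY.2]))
  -- composition identities
  have hcomp : ∀ n, 1 ≤ n → n ≤ N → ∀ X : ℝ,
      phiMap N xs n (xs 0 + (xs N - xs 0) * ((X - x 0) / (x N - x 0)))
        = xs 0 + (xs N - xs 0) * ((phiMap N x n X - x 0) / (x N - x 0)) :=
    my_comp_eq N x xs hD.hN hD.hx hDs.hx hratio.1
  have hcomp' : ∀ m, 1 ≤ m → m ≤ M → ∀ Y : ℝ,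
      phiMap M ys m (ys 0 + (ys M - ys 0) * ((Y - y 0) / (y M - y 0)))
        = ys 0 + (ys M - ys 0) * ((phiMap M y m Y - y 0) / (y M - y 0)) :=
    my_comp_eq M y ys hD.hM hD.hy hDs.hy hratio.2
  -- transfer of q
  have hq : ∀ n m, ∀ u v : ℝ,
      qMap N M xs ys t c n m (xs 0 + (xs N - xs 0) * ((u - x 0) / (x N - x 0)))
        (ys 0 + (ys M - ys 0) * ((v - y 0) / (y M - y 0)))
      = qMap N M x y t c n m u v := by
    intro n m u v
    have e1 : x 0 + (x N - x 0) * ((u - x 0) / (x N - x 0)) = u := by field_simp; ring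
    have e2 : y 0 + (y M - y 0) * ((v - y 0) / (y M - y 0)) = v := by field_simp; ring
    unfold qMap
    rw [my_pMap_transfer N M x y xs ys t t c (fun _ _ => 0) n m hxne' hyne' hxsne' hysne',
      e1, e2]
  -- the difference function
  set Dfun : ℝ × ℝ → ℝ := fun P =>
    G₂ (xs 0 + (xs N - xs 0) * ((P.1 - x 0) / (x N - x 0)))
       (ys 0 + (ys M - ys 0) * ((P.2 - y 0) / (y M - y 0))) - F₂ P.1 P.2 with hDfun
  have hDeq : ∀ n m, 1 ≤ n → n ≤ N → 1 ≤ m → m ≤ M →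
      ∀ u ∈ Icc (x 0) (x N), ∀ v ∈ Icc (y 0) (y M),
      Dfun (phiMap N x n u, phiMap M y m v) = c n m * Dfun (u, v) := by
    intro n m h1 h2 h3 h4 u hu v hv
    have hFu := (hF.2.2.2 n m h1 h2 h3 h4 u hu v hv).2
    have hGu := (hG.2.2.2 n m h1 h2 h3 h4 _ (hLmem u hu) _ (hL'mem v hv)).2
    rw [hcomp n h1 h2 u, hcomp' m h3 h4 v] at hGu
    simp only [hDfun]
    rw [hGu, hFu, hq n m u v]
    ring
  -- continuity of Dfun on S
  have hcont : ContinuousOn Dfun (Icc (x 0) (x N) ×ˢ Icc (y 0) (y M)) := by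
    apply ContinuousOn.sub
    · exact ContinuousOn.comp hG.2.1
        ((Continuous.continuousOn (by fun_prop) :
          ContinuousOn (fun P : ℝ × ℝ =>
           ((xs 0 + (xs N - xs 0) * ((P.1 - x 0) / (x N - x 0))),
            (ys 0 + (ys M - ys 0) * ((P.2 - y 0) / (y M - y 0))))) _))
        (fun P hP => ⟨hLmem _ hP.1, hL'mem _ hP.2⟩)
    · exact hF.2.1
  -- maximum of |Dfun| on the compact S
  have hKcomp : IsCompact (Icc (x 0) (x N) ×ˢ Icc (y 0) (y M)) :=
    isCompact_Icc.prod isCompact_Icc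
  have hKne : (Icc (x 0) (x N) ×ˢ Icc (y 0) (y M)).Nonempty :=
    ⟨(x 0, y 0), ⟨⟨le_rfl, hxlt.le⟩, ⟨le_rfl, hylt.le⟩⟩⟩
  obtain ⟨P₀, hP₀, hmax⟩ := hKcomp.exists_isMaxOn hKne hcont.abs
  have hmax' : ∀ P ∈ Icc (x 0) (x N) ×ˢ Icc (y 0) (y M), |Dfun P| ≤ |Dfun P₀| :=
    fun P hP => hmax hP
  -- the maximum is ≤ 0
  have hD0 : |Dfun P₀| ≤ 0 := by
    obtain ⟨n, hn1, hn2, hcx1, hcx2⟩ := my_exists_cell x N hD.hN P₀.1 hP₀.1.1 hP₀.1.2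
    obtain ⟨m, hm1, hm2, hcy1, hcy2⟩ := my_exists_cell y M hD.hM P₀.2 hP₀.2.1 hP₀.2.2
    have hdx : x (n-1) < x n := my_knots_lt x N hD.hx (n-1) n (by omega) hn2
    have hdy : y (m-1) < y m := my_knots_lt y M hD.hy (m-1) m (by omega) hm2
    have hdxne : x n - x (n-1) ≠ 0 := sub_ne_zero.mpr hdx.ne'
    have hdyne : y m - y (m-1) ≠ 0 := sub_ne_zero.mpr hdy.ne'
    set u := x 0 + (x N - x 0) * ((P₀.1 - x (n-1)) / (x n - x (n-1))) with hu
    set v := y 0 + (y M - y 0) * ((P₀.2 - y (m-1)) / (y m - y (m-1))) with hv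
    have hum : u ∈ Icc (x 0) (x N) :=
      my_affine_mem (x 0) (x N) hxlt.le _
        (div_nonneg (by linarith) (by linarith))
        ((div_le_one (by linarith)).mpr (by linarith))
    have hvm : v ∈ Icc (y 0) (y M) :=
      my_affine_mem (y 0) (y M) hylt.le _
        (div_nonneg (by linarith) (by linarith))
        ((div_le_one (by linarith)).mpr (by linarith))
    have hphiu : phiMap N x n u = P₀.1 := by
      unfold phiMap; rw [hu]; field_simp; ring
    have hphiv : phiMap M y m v = P₀.2 := by
      unfold phiMap; rw [hv]; field_simp; ring
    have hkey := hDeq n m hn1 hn2 hm1 hm2 u hum v hvm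
    rw [hphiu, hphiv] at hkey
    have hP₀eta : ((P₀.1, P₀.2) : ℝ × ℝ) = P₀ := rfl
    rw [hP₀eta] at hkey
    have habs : |Dfun P₀| = |c n m| * |Dfun (u, v)| := by rw [hkey, abs_mul]
    have hle : |Dfun (u, v)| ≤ |Dfun P₀| := hmax' (u, v) ⟨hum, hvm⟩
    have h3 : |c n m| * |Dfun (u, v)| ≤ Γ * |Dfun P₀| :=
      mul_le_mul (hΓge n m hn1 hn2 hm1 hm2) hle (abs_nonneg _) hΓ0
    nlinarith [abs_nonneg (Dfun P₀)]
  -- conclusion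
  intro X hX Y hY
  have hmem : ((X, Y) : ℝ × ℝ) ∈ Icc (x 0) (x N) ×ˢ Icc (y 0) (y M) := ⟨hX, hY⟩
  have hDXY : |Dfun (X, Y)| ≤ 0 := le_trans (hmax' (X, Y) hmem) hD0
  have heq : G₂ (RX X) (RY Y) - F₂ X Y = Dfun (X, Y) := by
    simp only [hDfun]
    rw [hRL X hX, hRL' Y hY]
  rw [heq]
  exact le_trans hDXY hRHS


end
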